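/- Let ū_h ∈ U with ‖ū_h‖_{X*} ≤ 1/α and ȳ_h ∈ Y be arbitrary, and set ρ_y := Aȳ_h − Bū_h ∈ W*. Then ‖Cȳ_h − Cȳ‖_G² ≤ (4/α)‖B*ŵ‖_X − 4·ū_h(B*ŵ) + 4‖C(A⁻¹ρ_y)‖_G². -/

import Mathlib

open RealInnerProductSpace NormedSpace

set_option maxHeartbeats 1000000 in
/-- A posteriori error estimate for Ivanov regularization: residual estimate at the
discrete state ȳ_h. -/
theorem stmt_7
    {X G Y W : Type*}
    [NormedAddCommGroup X] [NormedSpace ℝ X] [CompleteSpace X]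
    [NormedAddCommGroup G] [InnerProductSpace ℝ G] [CompleteSpace G]
    [NormedAddCommGroup Y] [NormedSpace ℝ Y] [CompleteSpace Y]
    [NormedAddCommGroup W] [NormedSpace ℝ W] [CompleteSpace W]
    (A : Y ≃L[ℝ] StrongDual ℝ W) (Astar : W ≃L[ℝ] StrongDual ℝ Y)
    (hAadj : ∀ (y : Y) (w : W), A y w = Astar w y)
    (Bstar : W →L[ℝ] X) (B : StrongDual ℝ X →L[ℝ] StrongDual ℝ W)
    (hB : ∀ (u : StrongDual ℝ X) (w : W), B u w = u (Bstar w))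
    (C : Y →L[ℝ] G) (Cstar : G →L[ℝ] StrongDual ℝ Y)
    (hCadj : ∀ (y : Y) (g : G), ⟪C y, g⟫ = Cstar g y)
    (gδ : G) (α : ℝ) (hα : 0 < α)
    (ubar : StrongDual ℝ X) (ybar : Y)
    (hubar : ‖ubar‖ ≤ 1/α) (hybar : ybar = A.symm (B ubar))
    (hmin : ∀ u : StrongDual ℝ X, ‖u‖ ≤ 1/α →
      (1/2) * ‖C ybar - gδ‖^2 ≤ (1/2) * ‖C (A.symm (B u)) - gδ‖^2)
    (yh : Y) (what : W)
    (hwhat : what = Astar.symm (-(Cstar (C yh - gδ))))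
    (uh : StrongDual ℝ X) (huh : ‖uh‖ ≤ 1/α) :
    ‖C yh - C ybar‖^2 ≤
      (4/α) * ‖Bstar what‖ - 4 * uh (Bstar what)
      + 4 * ‖C (A.symm (A yh - B uh))‖^2 := by
  set ρ : StrongDual ℝ W := A yh - B uh with hρ
  set yt : Y := A.symm (B uh) with hyt
  have hAr : A.symm ρ = yh - yt := by
    rw [hρ, map_sub, A.symm_apply_apply, hyt]
  set e : G := C yh - C ybar with he
  set r : G := C (A.symm ρ) with hr
  have hrr : r = C yh - C yt := by rw [hr, hAr, map_sub]
  set d : G := C yt - C ybar with hd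
  have hed : e = r + d := by rw [hrr, hd, he]; abel
  set p : G := C yh - gδ with hp
  set q : G := C ybar - gδ with hq
  have hAs : ∀ y : Y, Astar what y = -⟪C y, C yh - gδ⟫ := by
    intro y
    rw [hwhat, Astar.apply_symm_apply, ContinuousLinearMap.neg_apply, ← hCadj]
  have hAyb : A ybar = B ubar := by rw [hybar, A.apply_symm_apply]
  -- variational inequality
  have hvar : 0 ≤ ⟪q, d⟫ := by
    by_contra hneg
    push_neg at hneg
    set s := ⟪q, d⟫ with hs
    have hkey : ∀ t : ℝ, 0 < t → t ≤ 1 → 0 ≤ s + t/2 * ‖d‖^2 := by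
      intro t ht ht1
      have hfeas : ‖ubar + t • (uh - ubar)‖ ≤ 1/α := by
        have hsplit : ubar + t • (uh - ubar) = (1 - t) • ubar + t • uh := by module
        rw [hsplit]
        calc ‖(1-t) • ubar + t • uh‖ ≤ ‖(1-t) • ubar‖ + ‖t • uh‖ := norm_add_le _ _
          _ = (1-t) * ‖ubar‖ + t * ‖uh‖ := by
              rw [norm_smul, norm_smul, Real.norm_of_nonneg (by linarith),
                Real.norm_of_nonneg ht.le]
          _ ≤ (1-t) * (1/α) + t * (1/α) := by
              have h1 : (1-t) * ‖ubar‖ ≤ (1-t) * (1/α) :=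
                mul_le_mul_of_nonneg_left hubar (by linarith)
              have h2 : t * ‖uh‖ ≤ t * (1/α) :=
                mul_le_mul_of_nonneg_left huh ht.le
              linarith
          _ = 1/α := by ring
      have hm := hmin _ hfeas
      have hstate : C (A.symm (B (ubar + t • (uh - ubar)))) - gδ = q + t • d := by
        rw [hq, hd, hyt, hybar]
        simp only [map_add, map_smul, map_sub]
        module
      rw [hstate] at hm
      have hexp : ‖q + t • d‖^2 = ‖q‖^2 + 2*(t*s) + t^2*‖d‖^2 := by
        rw [norm_add_sq_real, real_inner_smul_right, norm_smul, mul_pow, Real.norm_eq_abs, sq_abs, hs]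
      rw [hexp] at hm
      have h0 : 0 ≤ t * (2*s + t*‖d‖^2) := by
        have hring : t*(2*s + t*‖d‖^2) = 2*(t*s) + t^2*‖d‖^2 := by ring
        linarith
      have h1 : (0:ℝ) ≤ 2*s + t*‖d‖^2 := by
        have := le_of_mul_le_mul_left (by rw [mul_zero]; exact h0 : t*0 ≤ t*(2*s + t*‖d‖^2)) ht
        linarith
      linarith
    have hKpos : (0:ℝ) < ‖d‖^2 + 1 := by positivity
    set t0 := min 1 ((-s)/(‖d‖^2+1)) with ht0
    have ht0pos : 0 < t0 := lt_min one_pos (div_pos (by linarith) hKpos)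
    have ht0le : t0 ≤ 1 := min_le_left _ _
    have h1 := hkey t0 ht0pos ht0le
    have h2 : t0 * (‖d‖^2+1) ≤ -s := by
      calc t0 * (‖d‖^2+1) ≤ ((-s)/(‖d‖^2+1)) * (‖d‖^2+1) :=
            mul_le_mul_of_nonneg_right (min_le_right _ _) hKpos.le
        _ = -s := div_mul_cancel₀ _ (ne_of_gt hKpos)
    have hKnn : (0:ℝ) ≤ ‖d‖^2 := sq_nonneg _
    nlinarith [h1, h2, ht0pos, hneg, hKnn]
  -- adjoint identities
  have h2 : ⟪p, e⟫ = -(ρ what) - uh (Bstar what) + ubar (Bstar what) := by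
    have step1 : ⟪p, e⟫ = ⟪C (yh - ybar), C yh - gδ⟫ := by
      rw [real_inner_comm, map_sub, he, hp]
    have step2 : ⟪C (yh - ybar), C yh - gδ⟫ = -(Astar what (yh - ybar)) := by
      rw [hAs]; ring
    rw [step1, step2, ← hAadj, map_sub, hAyb]
    have hAyh : A yh = ρ + B uh := by rw [hρ]; abel
    rw [hAyh]
    simp only [ContinuousLinearMap.add_apply, ContinuousLinearMap.sub_apply, hB]
    ring
  have h3 : ⟪p, r⟫ = -(ρ what) := by
    have step1 : ⟪p, r⟫ = ⟪C (A.symm ρ), C yh - gδ⟫ := by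
      rw [real_inner_comm, hr, hp]
    rw [step1]
    have step2 : ⟪C (A.symm ρ), C yh - gδ⟫ = -(Astar what (A.symm ρ)) := by
      rw [hAs]; ring
    rw [step2, ← hAadj, A.apply_symm_apply]
  have hqr : ⟪q, r⟫ = ⟪p, r⟫ - ⟪e, r⟫ := by
    have hq' : q = p - e := by rw [hp, he, hq]; abel
    rw [hq', inner_sub_left]
  have hqe : ⟪q, e⟫ = ⟪q, r⟫ + ⟪q, d⟫ := by rw [hed, inner_add_right]
  have hE : ‖e‖^2 = ⟪p, e⟫ - ⟪q, e⟫ := by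
    have h5 : (‖e‖^2 : ℝ) = ⟪e, e⟫ := (real_inner_self_eq_norm_sq e).symm
    have hpq : e = p - q := by rw [hp, he, hq]; abel
    rw [h5]
    nth_rewrite 1 [hpq]
    rw [inner_sub_left]
  have hub : ubar (Bstar what) ≤ (1/α) * ‖Bstar what‖ := by
    calc ubar (Bstar what) ≤ ‖ubar (Bstar what)‖ := by
          rw [Real.norm_eq_abs]; exact le_abs_self _
      _ ≤ ‖ubar‖ * ‖Bstar what‖ := ubar.le_opNorm _
      _ ≤ (1/α) * ‖Bstar what‖ :=
          mul_le_mul_of_nonneg_right hubar (norm_nonneg _)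
  have huhb : uh (Bstar what) ≤ (1/α) * ‖Bstar what‖ := by
    calc uh (Bstar what) ≤ ‖uh (Bstar what)‖ := by
          rw [Real.norm_eq_abs]; exact le_abs_self _
      _ ≤ ‖uh‖ * ‖Bstar what‖ := uh.le_opNorm _
      _ ≤ (1/α) * ‖Bstar what‖ :=
          mul_le_mul_of_nonneg_right huh (norm_nonneg _)
  have hCS : ⟪e, r⟫ ≤ (1/2) * ‖e‖^2 + (1/2) * ‖r‖^2 := by
    have := real_inner_le_norm e r
    nlinarith [sq_nonneg (‖e‖ - ‖r‖)]
  have hr2 : (0:ℝ) ≤ ‖r‖^2 := sq_nonneg _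
  have hdiv : (4/α) * ‖Bstar what‖ = 4 * ((1/α) * ‖Bstar what‖) := by ring
  rw [hdiv]
  linarith [hE, hqe, hqr, h2, h3, hvar, hub, huhb, hCS, hr2]
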